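/- arXiv:1607.07896 — 6 statements merged into one kernel-verified Lean document; each statement's English description precedes it below -/
import Mathlib

section
/- Consider a vehicle with dynamics ẍ = u, |u| ≤ a_m, 0 ≤ ẋ ≤ v_m, initial position x(0) = 0, initial velocity ẋ(0) = v₀ ∈ [0, v_m], which must reach position d with ẋ(t_f) = v_m. If d < (v₀² + v_m²)/(2a_m), then every feasible trajectory has terminal time t_f < 2v_m/a_m. -/
set_option maxHeartbeats 800000


/-- **Maximal duration of a feasible trajectory that cannot stop.**
Double integrator `ẍ = u`, `|u| ≤ a_m` (encoded by `v` being `a_m`-Lipschitz),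
`0 ≤ ẋ ≤ v_m`, starting at position `0` with speed `v₀ ∈ [0, v_m]` and ending at
position `d` with speed `v_m`.  If `d < (v₀² + v_m²)/(2 a_m)` then every feasible
trajectory has terminal time `t_f < 2 v_m / a_m`. -/
theorem terminal_time_lt_of_short_distance
    (a_m v_m v₀ d t_f : ℝ) (ha : 0 < a_m) (hvm : 0 < v_m)
    (hv0 : v₀ ∈ Set.Icc 0 v_m)
    (hd : d < (v₀ ^ 2 + v_m ^ 2) / (2 * a_m))
    (x v : ℝ → ℝ) (ht : 0 ≤ t_f)
    (hx : ∀ t ∈ Set.Icc (0 : ℝ) t_f, HasDerivAt x (v t) t)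
    (hLip : LipschitzOnWith (Real.toNNReal a_m) v (Set.Icc 0 t_f))
    (hvb : ∀ t ∈ Set.Icc (0 : ℝ) t_f, 0 ≤ v t ∧ v t ≤ v_m)
    (h0 : x 0 = 0) (hv0' : v 0 = v₀) (hf : x t_f = d) (hvf : v t_f = v_m) :
    t_f < 2 * v_m / a_m := by
  by_contra hcon
  push_neg at hcon
  obtain ⟨hv00, hv0m⟩ := hv0
  have ham := ha.le
  have hvc : ∀ s ∈ Set.Icc (0:ℝ) t_f, ∀ t ∈ Set.Icc (0:ℝ) t_f,
      |v s - v t| ≤ a_m * |s - t| := by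
    intro s hs t htt
    have := hLip.dist_le_mul s hs t htt
    simpa [Real.dist_eq, Real.coe_toNNReal a_m ham] using this
  set c1 := v₀ / a_m with hc1
  set c2 := t_f - v_m / a_m with hc2
  have hqnn : 0 ≤ v_m / a_m := (div_nonneg hvm.le ham)
  have hc10 : 0 ≤ c1 := div_nonneg hv00 ham
  have hc1m : c1 ≤ v_m / a_m := (div_le_div_iff_of_pos_right ha).mpr hv0m
  have h2q : 2 * v_m / a_m = 2 * (v_m / a_m) := by ring
  have hc1c2 : c1 ≤ c2 := by rw [h2q] at hcon; simp only [hc2]; linarith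
  have hc2tf : c2 ≤ t_f := by simp only [hc2]; linarith
  have hc1tf : c1 ≤ t_f := hc1c2.trans hc2tf
  have hc20 : 0 ≤ c2 := hc10.trans hc1c2
  have hvcont : ContinuousOn v (Set.Icc 0 t_f) := hLip.continuousOn
  have hint : ∀ a b : ℝ, 0 ≤ a → b ≤ t_f → a ≤ b →
      IntervalIntegrable v MeasureTheory.volume a b := by
    intro a b ha0 hb hab
    apply ContinuousOn.intervalIntegrable
    rw [Set.uIcc_of_le hab]
    exact hvcont.mono (Set.Icc_subset_Icc ha0 hb)
  have hftc : ∫ t in (0:ℝ)..t_f, v t = d := by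
    rw [intervalIntegral.integral_eq_sub_of_hasDerivAt
      (fun t htmem => hx t (by rwa [Set.uIcc_of_le ht] at htmem))
      (hint 0 t_f le_rfl le_rfl ht), hf, h0, sub_zero]
  have i1 := hint 0 c1 le_rfl hc1tf hc10
  have i2 := hint c1 c2 hc10 hc2tf hc1c2
  have i3 := hint c2 t_f hc20 le_rfl hc2tf
  have i12 := hint 0 c2 le_rfl hc2tf hc20
  have hsplit : (∫ t in (0:ℝ)..c1, v t) + (∫ t in c1..c2, v t)
      + (∫ t in c2..t_f, v t) = d := by
    rw [intervalIntegral.integral_add_adjacent_intervals i1 i2,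
      intervalIntegral.integral_add_adjacent_intervals i12 i3, hftc]
  -- first bound
  have hlin1 : IntervalIntegrable (fun t => v₀ - a_m * t) MeasureTheory.volume 0 c1 :=
    (Continuous.intervalIntegrable (by continuity) _ _)
  have hb1 : (∫ t in (0:ℝ)..c1, (v₀ - a_m * t)) ≤ ∫ t in (0:ℝ)..c1, v t := by
    apply intervalIntegral.integral_mono_on hc10 hlin1 i1
    intro t htmem
    have h := hvc 0 ⟨le_rfl, ht⟩ t ⟨htmem.1, htmem.2.trans hc1tf⟩
    rw [zero_sub, abs_neg, abs_of_nonneg htmem.1] at h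
    have h1 := abs_le.mp h
    linarith [h1.1, h1.2]
  have hval1 : (∫ t in (0:ℝ)..c1, (v₀ - a_m * t)) = v₀ ^ 2 / (2 * a_m) := by
    have hmul : IntervalIntegrable (fun t : ℝ => a_m * t) MeasureTheory.volume 0 c1 :=
      (continuous_const.mul continuous_id').intervalIntegrable _ _
    rw [intervalIntegral.integral_sub intervalIntegrable_const hmul,
      intervalIntegral.integral_const, intervalIntegral.integral_const_mul,
      integral_id]
    simp only [hc1]
    field_simp
    have hinv : a_m * a_m⁻¹ = 1 := mul_inv_cancel₀ ha.ne'
    linear_combination (2 * v₀ ^ 2) * hinv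
  -- middle bound
  have hb2 : (0:ℝ) ≤ ∫ t in c1..c2, v t := by
    apply intervalIntegral.integral_nonneg hc1c2
    intro t htmem
    exact (hvb t ⟨hc10.trans htmem.1, htmem.2.trans hc2tf⟩).1
  -- last bound
  have hlin3 : IntervalIntegrable (fun t => v_m - a_m * (t_f - t))
      MeasureTheory.volume c2 t_f :=
    (Continuous.intervalIntegrable (by continuity) _ _)
  have hb3 : (∫ t in c2..t_f, (v_m - a_m * (t_f - t))) ≤ ∫ t in c2..t_f, v t := by
    apply intervalIntegral.integral_mono_on hc2tf hlin3 i3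
    intro t htmem
    have h := hvc t_f ⟨ht, le_rfl⟩ t ⟨hc20.trans htmem.1, htmem.2⟩
    rw [abs_of_nonneg (by linarith [htmem.2] : (0:ℝ) ≤ t_f - t)] at h
    have h1 := abs_le.mp h
    linarith [h1.1, h1.2]
  have hval3 : (∫ t in c2..t_f, (v_m - a_m * (t_f - t))) = v_m ^ 2 / (2 * a_m) := by
    have : (fun t => v_m - a_m * (t_f - t)) = fun t => (v_m - a_m * t_f) + a_m * t := by
      funext t; ring
    have hmul : IntervalIntegrable (fun t : ℝ => a_m * t) MeasureTheory.volume c2 t_f :=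
      (continuous_const.mul continuous_id').intervalIntegrable _ _
    rw [this, intervalIntegral.integral_add intervalIntegrable_const hmul,
      intervalIntegral.integral_const, intervalIntegral.integral_const_mul,
      integral_id]
    simp only [hc2]
    field_simp
    have hinv : a_m * a_m⁻¹ = 1 := mul_inv_cancel₀ ha.ne'
    linear_combination (2 * v_m ^ 2 - 2 * a_m * v_m * t_f) * hinv
  have e1 : v₀ ^ 2 / (2 * a_m) ≤ ∫ t in (0:ℝ)..c1, v t := hval1 ▸ hb1
  have e3 : v_m ^ 2 / (2 * a_m) ≤ ∫ t in c2..t_f, v t := hval3 ▸ hb3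
  have hsum : (v₀ ^ 2 + v_m ^ 2) / (2 * a_m)
      = v₀ ^ 2 / (2 * a_m) + v_m ^ 2 / (2 * a_m) := by ring
  linarith
end

section
/- For a double integrator with bounded acceleration, if a vehicle cannot come to a full stop (because the distance available is less than (v₀² + v_m²)/(2a_m)), then the minimum speed along any feasible trajectory reaching the target with full speed v_m is strictly positive. -/
/-- **Strictly positive minimum speed when a full stop is impossible.**
Double integrator `ẍ = u`, `|u| ≤ a_m`, `ẋ ∈ [0, v_m]`, initial state `(0, v₀)`,
terminal condition `x(t_f) = d`, `ẋ(t_f) = v_m` with `0 < d < (v₀² + v_m²)/(2 a_m)`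
(the distance needed to stop from `v₀` and re-accelerate to `v_m`).  Then the infimum
over all feasible trajectories and all times of the speed is strictly positive: there
is `ε > 0` bounding the speed from below along every feasible trajectory. -/
theorem min_speed_pos_of_short_distance
    (a_m v_m v₀ d : ℝ) (ha : 0 < a_m) (hvm : 0 < v_m)
    (hv0 : v₀ ∈ Set.Icc 0 v_m) (hd0 : 0 < d)
    (hd : d < (v₀ ^ 2 + v_m ^ 2) / (2 * a_m)) :
    ∃ ε > 0, ∀ (t_f : ℝ) (x v : ℝ → ℝ), 0 ≤ t_f →
      (∀ t ∈ Set.Icc (0 : ℝ) t_f, HasDerivAt x (v t) t) →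
      LipschitzOnWith (Real.toNNReal a_m) v (Set.Icc 0 t_f) →
      (∀ t ∈ Set.Icc (0 : ℝ) t_f, 0 ≤ v t ∧ v t ≤ v_m) →
      x 0 = 0 → v 0 = v₀ → x t_f = d → v t_f = v_m →
      ∀ t ∈ Set.Icc (0 : ℝ) t_f, ε ≤ v t := by
  have hc : 0 < (v₀ ^ 2 + v_m ^ 2 - 2 * a_m * d) / 2 := by
    have h2 : d * (2 * a_m) < v₀ ^ 2 + v_m ^ 2 := (lt_div_iff₀ (by positivity)).mp hd
    linarith
  refine ⟨Real.sqrt ((v₀ ^ 2 + v_m ^ 2 - 2 * a_m * d) / 2), Real.sqrt_pos.mpr hc, ?_⟩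
  intro t_f x v htf hx hL hv hx0 hv00 hxf hvf t ht
  set w := v t with hw
  have hw0 : 0 ≤ w := (hv t ht).1
  have hwm : w ≤ v_m := (hv t ht).2
  have h0mem : (0 : ℝ) ∈ Set.Icc (0 : ℝ) t_f := Set.left_mem_Icc.mpr htf
  have hfmem : t_f ∈ Set.Icc (0 : ℝ) t_f := Set.right_mem_Icc.mpr htf
  have hvcont : ContinuousOn v (Set.Icc 0 t_f) := hL.continuousOn
  have hdist : ∀ s ∈ Set.Icc (0:ℝ) t_f, ∀ u ∈ Set.Icc (0:ℝ) t_f,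
      |v s - v u| ≤ a_m * |s - u| := by
    intro s hs u hu
    have := hL.dist_le_mul s hs u hu
    simpa [Real.dist_eq, Real.coe_toNNReal a_m ha.le] using this
  have hint : ∀ a b : ℝ, a ∈ Set.Icc (0:ℝ) t_f → b ∈ Set.Icc (0:ℝ) t_f →
      IntervalIntegrable v MeasureTheory.volume a b := by
    intro a b ha' hb'
    exact (hvcont.mono (Set.uIcc_subset_Icc ha' hb')).intervalIntegrable
  have htotal : ∫ s in (0:ℝ)..t_f, v s = d := by
    have := intervalIntegral.integral_eq_sub_of_hasDerivAt
      (fun s hs => hx s (by rwa [Set.uIcc_of_le htf] at hs))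
      (hint 0 t_f h0mem hfmem)
    rw [this, hxf, hx0, sub_zero]
  -- Lemma A : distance before t
  have hA : (v₀ ^ 2 - w ^ 2) / (2 * a_m) ≤ ∫ s in (0:ℝ)..t, v s := by
    rcases le_or_gt v₀ w with h | h
    · have hnn : 0 ≤ ∫ s in (0:ℝ)..t, v s :=
        intervalIntegral.integral_nonneg ht.1 (fun s hs => (hv s ⟨hs.1, hs.2.trans ht.2⟩).1)
      have hle : (v₀ ^ 2 - w ^ 2) / (2 * a_m) ≤ 0 := by
        apply div_nonpos_of_nonpos_of_nonneg
        · nlinarith [hv0.1]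
        · positivity
      linarith
    · set τ := (v₀ - w) / a_m with hτ
      have hτ0 : 0 ≤ τ := div_nonneg (by linarith) ha.le
      have hτt : τ ≤ t := by
        have hb := hdist t ht 0 h0mem
        rw [hv00, sub_zero, abs_of_nonneg ht.1] at hb
        have := (abs_le.mp hb).1
        rw [div_le_iff₀ ha]; linarith
      have hτmem : τ ∈ Set.Icc (0:ℝ) t_f := ⟨hτ0, hτt.trans ht.2⟩
      have hsplit : (∫ s in (0:ℝ)..τ, v s) + ∫ s in τ..t, v s = ∫ s in (0:ℝ)..t, v s :=
        intervalIntegral.integral_add_adjacent_intervals (hint 0 τ h0mem hτmem)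
          (hint τ t hτmem ht)
      have hcont1 : Continuous fun s : ℝ => v₀ - a_m * s :=
        continuous_const.sub (continuous_const.mul continuous_id)
      have h1 : ∫ s in (0:ℝ)..τ, (v₀ - a_m * s) ≤ ∫ s in (0:ℝ)..τ, v s := by
        apply intervalIntegral.integral_mono_on hτ0
          (hcont1.intervalIntegrable _ _)
          (hint 0 τ h0mem hτmem)
        intro s hs
        have hsmem : s ∈ Set.Icc (0:ℝ) t_f := ⟨hs.1, hs.2.trans hτmem.2⟩
        have hb := hdist 0 h0mem s hsmem
        rw [hv00] at hb
        have habs : |(0:ℝ) - s| = s := by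
          rw [abs_sub_comm, sub_zero, abs_of_nonneg hs.1]
        rw [habs] at hb
        have := (abs_le.mp hb).2
        linarith
      have h1val : ∫ s in (0:ℝ)..τ, (v₀ - a_m * s) = (v₀ ^ 2 - w ^ 2) / (2 * a_m) := by
        rw [intervalIntegral.integral_sub (g := fun s : ℝ => a_m * s) (intervalIntegrable_const)
            (((continuous_const.mul continuous_id) : Continuous fun s : ℝ => a_m * s).intervalIntegrable _ _),
          intervalIntegral.integral_const_mul, integral_id,
          intervalIntegral.integral_const, smul_eq_mul, hτ]
        field_simp
        ring
      have h2 : 0 ≤ ∫ s in τ..t, v s :=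
        intervalIntegral.integral_nonneg hτt
          (fun s hs => (hv s ⟨hτ0.trans hs.1, hs.2.trans ht.2⟩).1)
      linarith
  -- Lemma B : distance after t
  have hB : (v_m ^ 2 - w ^ 2) / (2 * a_m) ≤ ∫ s in t..t_f, v s := by
    set σ := (v_m - w) / a_m with hσ
    have hσ0 : 0 ≤ σ := div_nonneg (by linarith) ha.le
    have hσt : t ≤ t_f - σ := by
      have hb := hdist t_f hfmem t ht
      rw [hvf] at hb
      have h1 := (abs_le.mp hb).2
      have h2 : |t_f - t| = t_f - t := abs_of_nonneg (by linarith [ht.2])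
      rw [h2] at h1
      have : v_m - w ≤ a_m * (t_f - t) := h1
      have hdiv : σ ≤ t_f - t := by rw [hσ, div_le_iff₀ ha]; linarith
      linarith
    have hmmem : t_f - σ ∈ Set.Icc (0:ℝ) t_f := ⟨ht.1.trans hσt, by linarith⟩
    have hsplit : (∫ s in t..(t_f - σ), v s) + ∫ s in (t_f - σ)..t_f, v s = ∫ s in t..t_f, v s :=
      intervalIntegral.integral_add_adjacent_intervals (hint t (t_f - σ) ht hmmem)
        (hint (t_f - σ) t_f hmmem hfmem)
    have hcont2 : Continuous fun s : ℝ => v_m - a_m * (t_f - s) :=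
      continuous_const.sub (continuous_const.mul (continuous_const.sub continuous_id))
    have h1 : ∫ s in (t_f - σ)..t_f, (v_m - a_m * (t_f - s)) ≤ ∫ s in (t_f - σ)..t_f, v s := by
      apply intervalIntegral.integral_mono_on (by linarith)
        (hcont2.intervalIntegrable _ _)
        (hint (t_f - σ) t_f hmmem hfmem)
      intro s hs
      have hsmem : s ∈ Set.Icc (0:ℝ) t_f := ⟨hmmem.1.trans hs.1, hs.2⟩
      have hb := hdist t_f hfmem s hsmem
      rw [hvf] at hb
      have h2 : |t_f - s| = t_f - s := abs_of_nonneg (by linarith [hs.2])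
      rw [h2] at hb
      have := (abs_le.mp hb).2
      linarith
    have h1val : ∫ s in (t_f - σ)..t_f, (v_m - a_m * (t_f - s)) = (v_m ^ 2 - w ^ 2) / (2 * a_m) := by
      have heq : ∀ s, v_m - a_m * (t_f - s) = (v_m - a_m * t_f) + a_m * s := by intro s; ring
      simp_rw [heq]
      rw [intervalIntegral.integral_add (g := fun s : ℝ => a_m * s) (intervalIntegrable_const)
          (((continuous_const.mul continuous_id) : Continuous fun s : ℝ => a_m * s).intervalIntegrable _ _),
        intervalIntegral.integral_const_mul, integral_id,
        intervalIntegral.integral_const, smul_eq_mul, hσ]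
      field_simp
      ring
    have h2 : 0 ≤ ∫ s in t..(t_f - σ), v s :=
      intervalIntegral.integral_nonneg hσt
        (fun s hs => (hv s ⟨ht.1.trans hs.1, hs.2.trans hmmem.2⟩).1)
    linarith
  have hdd : (∫ s in (0:ℝ)..t, v s) + ∫ s in t..t_f, v s = d := by
    rw [intervalIntegral.integral_add_adjacent_intervals (hint 0 t h0mem ht)
      (hint t t_f ht hfmem), htotal]
  have hwsq : (v₀ ^ 2 + v_m ^ 2 - 2 * a_m * d) / 2 ≤ w ^ 2 := by
    have hAB : (v₀ ^ 2 - w ^ 2) / (2 * a_m) + (v_m ^ 2 - w ^ 2) / (2 * a_m) ≤ d := by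
      linarith
    rw [← add_div, div_le_iff₀ (by positivity)] at hAB
    nlinarith
  calc Real.sqrt ((v₀ ^ 2 + v_m ^ 2 - 2 * a_m * d) / 2) ≤ Real.sqrt (w ^ 2) :=
        Real.sqrt_le_sqrt hwsq
    _ = w := by rw [Real.sqrt_sq hw0]
end

section
/- The travel-time map T(ν) = ∫_{p₀}^0 dp / V_ν(p) + C, where V_ν(p) = min(max(V_x̄(p), ν), V_x̂(p)) and both V_x̄, V_x̂ take values in [0, v_m] with V_x̄ ≤ V_x̂ and V_x̂ bounded below by a positive constant, is continuous in ν on (0, v_m]; moreover, if V_x̄ vanishes somewhere then T(ν) → ∫_{p₀}^0 dp/V_x̄(p) + C (possibly +∞, interpreted via monotone convergence) as ν → 0⁺. -/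
open MeasureTheory Set Filter
open scoped ENNReal

/-- **Continuity of the travel-time map for clipped velocity paths.**
`p₀ < 0`, `Vbar ≤ Vhat` are measurable velocity paths with values in `[0, v_m]`,
`Vhat` bounded below by `mlow > 0` on `[p₀, 0]`, `C ≥ 0` a total waiting time, and
`V_ν(p) = min (max (Vbar p) ν) (Vhat p)` the clipped velocity path.  Then the
travel-time map `T(ν) = ∫_{p₀}^0 dp / V_ν(p) + C` is continuous on `(0, v_m]`;
moreover, if `Vbar` vanishes somewhere, then as `ν → 0⁺`, `T(ν)` tends (in `ℝ≥0∞`, by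
monotone convergence) to `∫_{p₀}^0 dp / Vbar(p) + C`, possibly `+∞`. -/
theorem travel_time_map_continuous
    (p₀ v_m C mlow : ℝ) (hp : p₀ < 0) (hv : 0 < v_m) (hC : 0 ≤ C) (hm : 0 < mlow)
    (Vbar Vhat : ℝ → ℝ) (hmb : Measurable Vbar) (hmh : Measurable Vhat)
    (hrange : ∀ p, 0 ≤ Vbar p ∧ Vbar p ≤ Vhat p ∧ Vhat p ≤ v_m)
    (hlow : ∀ p ∈ Set.Icc p₀ 0, mlow ≤ Vhat p) :
    ContinuousOn
      (fun ν => (∫ p in p₀..0, 1 / min (max (Vbar p) ν) (Vhat p)) + C)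
      (Set.Ioc 0 v_m) ∧
    ((∃ p ∈ Set.Icc p₀ 0, Vbar p = 0) →
      Filter.Tendsto
        (fun ν => ENNReal.ofReal
          ((∫ p in p₀..0, 1 / min (max (Vbar p) ν) (Vhat p)) + C))
        (nhdsWithin 0 (Set.Ioi 0))
        (nhds ((∫⁻ p in Set.Icc p₀ 0, (ENNReal.ofReal (Vbar p))⁻¹)
                + ENNReal.ofReal C))) := by
  set V : ℝ → ℝ → ℝ := fun ν p => min (max (Vbar p) ν) (Vhat p) with hV
  have hVnn : ∀ ν p, 0 ≤ ν → 0 ≤ V ν p := fun ν p hν =>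
    le_min (le_max_of_le_right hν) ((hrange p).1.trans (hrange p).2.1)
  have hVlb : ∀ ν, 0 < ν → ∀ p ∈ Set.Icc p₀ 0, min ν mlow ≤ V ν p := by
    intro ν hν p hp'
    exact le_min (le_trans (min_le_left _ _) (le_max_right _ _))
      (le_trans (min_le_right _ _) (hlow p hp'))
  have hVpos : ∀ ν, 0 < ν → ∀ p ∈ Set.Icc p₀ 0, 0 < V ν p := fun ν hν p hp' =>
    lt_of_lt_of_le (lt_min hν hm) (hVlb ν hν p hp')
  have hVmeas : ∀ ν, Measurable (fun p => V ν p) := fun ν =>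
    (hmb.max measurable_const).min hmh
  have hVmono : ∀ p, Monotone (fun ν => V ν p) := fun p ν ω h =>
    min_le_min (max_le_max le_rfl h) le_rfl
  have hVgeb : ∀ ν p, Vbar p ≤ V ν p := fun ν p =>
    le_min (le_max_left _ _) (hrange p).2.1
  have hInt : ∀ ν, 0 < ν → IntervalIntegrable (fun p => 1 / V ν p) volume p₀ 0 := by
    intro ν hν
    rw [intervalIntegrable_iff_integrableOn_Ioc_of_le hp.le]
    refine Integrable.mono' (g := fun _ => 1 / min ν mlow)
      (integrableOn_const measure_Ioc_lt_top.ne)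
      (measurable_const.div (hVmeas ν)).aestronglyMeasurable.restrict ?_
    refine (ae_restrict_iff' measurableSet_Ioc).2 (Eventually.of_forall fun p hp' => ?_)
    have h1 : min ν mlow ≤ V ν p := hVlb ν hν p (Set.Ioc_subset_Icc_self hp')
    have h2 : 0 < min ν mlow := lt_min hν hm
    have h3 : 0 < V ν p := h2.trans_le h1
    rw [Real.norm_eq_abs, abs_of_nonneg (by positivity)]
    exact one_div_le_one_div_of_le h2 h1
  -- pointwise difference bound
  have hdiff : ∀ a, 0 < a → ∀ ν ∈ Set.Ici a, ∀ ω ∈ Set.Ici a, ∀ p ∈ Set.Icc p₀ 0,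
      |1 / V ν p - 1 / V ω p| ≤ |ν - ω| / (min a mlow) ^ 2 := by
    intro a ha ν hν ω hω p hp'
    have hma : 0 < min a mlow := lt_min ha hm
    have hx : min a mlow ≤ V ν p :=
      le_trans (min_le_min hν le_rfl) (hVlb ν (ha.trans_le hν) p hp')
    have hy : min a mlow ≤ V ω p :=
      le_trans (min_le_min hω le_rfl) (hVlb ω (ha.trans_le hω) p hp')
    have hxp : 0 < V ν p := hma.trans_le hx
    have hyp : 0 < V ω p := hma.trans_le hy
    have key : |V ω p - V ν p| ≤ |ν - ω| := by
      have h1 : |V ω p - V ν p| ≤ max |max (Vbar p) ω - max (Vbar p) ν| |Vhat p - Vhat p| :=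
        abs_min_sub_min_le_max _ _ _ _
      have h2 : |max (Vbar p) ω - max (Vbar p) ν| ≤ |ω - ν| := by
        rw [max_comm (Vbar p) ω, max_comm (Vbar p) ν]
        exact abs_max_sub_max_le_abs _ _ _
      calc |V ω p - V ν p| ≤ max |max (Vbar p) ω - max (Vbar p) ν| |Vhat p - Vhat p| := h1
        _ ≤ |ω - ν| := by
            rw [sub_self, abs_zero]
            exact max_le h2 (abs_nonneg _)
        _ = |ν - ω| := abs_sub_comm _ _
    have heq : 1 / V ν p - 1 / V ω p = (V ω p - V ν p) / (V ν p * V ω p) := by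
      field_simp
    rw [heq, abs_div, abs_of_pos (mul_pos hxp hyp)]
    refine div_le_div₀ (abs_nonneg _) key (by positivity) ?_
    calc (min a mlow) ^ 2 = min a mlow * min a mlow := sq (min a mlow)
      _ ≤ V ν p * V ω p := mul_le_mul hx hy hma.le hxp.le
  -- integral difference bound
  have hIb : ∀ a, 0 < a → ∀ ν ∈ Set.Ici a, ∀ ω ∈ Set.Ici a,
      |(∫ p in p₀..0, 1 / V ν p) - ∫ p in p₀..0, 1 / V ω p|
        ≤ |ν - ω| / (min a mlow) ^ 2 * |0 - p₀| := by
    intro a ha ν hν ω hω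
    rw [← intervalIntegral.integral_sub (hInt ν (ha.trans_le hν)) (hInt ω (ha.trans_le hω))]
    rw [← Real.norm_eq_abs]
    refine intervalIntegral.norm_integral_le_of_norm_le_const fun p hp' => ?_
    rw [Set.uIoc_of_le hp.le] at hp'
    rw [Real.norm_eq_abs]
    exact hdiff a ha ν hν ω hω p (Set.Ioc_subset_Icc_self hp')
  -- Part 1: continuity
  have hcont : ContinuousOn
      (fun ν => (∫ p in p₀..0, 1 / V ν p) + C) (Set.Ioc 0 v_m) := by
    intro ν₀ hν₀
    have ha : 0 < ν₀ / 2 := half_pos hν₀.1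
    have hlip : LipschitzOnWith (Real.toNNReal (|0 - p₀| / (min (ν₀/2) mlow) ^ 2))
        (fun ν => (∫ p in p₀..0, 1 / V ν p) + C) (Set.Ici (ν₀/2)) := by
      refine LipschitzOnWith.of_dist_le' fun ν hν ω hω => ?_
      rw [Real.dist_eq, Real.dist_eq, add_sub_add_right_eq_sub]
      calc |(∫ p in p₀..0, 1 / V ν p) - ∫ p in p₀..0, 1 / V ω p|
          ≤ |ν - ω| / (min (ν₀/2) mlow) ^ 2 * |0 - p₀| := hIb _ ha ν hν ω hω
        _ = |0 - p₀| / (min (ν₀/2) mlow) ^ 2 * |ν - ω| := by ring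
    exact (hlip.continuousOn.continuousWithinAt
        (Set.mem_Ici.2 (half_le_self hν₀.1.le))).mono_of_mem_nhdsWithin
      (mem_nhdsWithin_of_mem_nhds (Ici_mem_nhds (half_lt_self hν₀.1)))
  -- PART 2 material
  set F : ℝ → ℝ≥0∞ := fun ν => ∫⁻ p in Set.Icc p₀ 0, (ENNReal.ofReal (V ν p))⁻¹ with hF
  have hA : ∀ ν, 0 < ν →
      ENNReal.ofReal ((∫ p in p₀..0, 1 / V ν p) + C) = F ν + ENNReal.ofReal C := by
    intro ν hν
    have hnn : 0 ≤ ∫ p in p₀..0, 1 / V ν p :=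
      intervalIntegral.integral_nonneg hp.le fun p hp' =>
        div_nonneg zero_le_one (hVnn ν p hν.le)
    rw [ENNReal.ofReal_add hnn hC]
    congr 1
    rw [intervalIntegral.integral_of_le hp.le,
      ofReal_integral_eq_lintegral_ofReal
        ((intervalIntegrable_iff_integrableOn_Ioc_of_le hp.le).1 (hInt ν hν))
        (Eventually.of_forall fun p => div_nonneg zero_le_one (hVnn ν p hν.le))]
    rw [hF]
    rw [← Measure.restrict_congr_set Ioc_ae_eq_Icc]
    refine setLIntegral_congr_fun measurableSet_Ioc (fun p hp' => ?_)
    have h3 := hVpos ν hν p (Set.Ioc_subset_Icc_self hp')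
    rw [one_div, ENNReal.ofReal_inv_of_pos h3]
  have hFanti : Antitone F := fun ν ω h =>
    lintegral_mono fun p => ENNReal.inv_le_inv.2 (ENNReal.ofReal_le_ofReal (hVmono p h))
  have htendF : Tendsto F (nhdsWithin 0 (Set.Ioi 0)) (nhds (sSup (F '' Set.Ioi 0))) :=
    hFanti.tendsto_nhdsGT 0
  have hL : sSup (F '' Set.Ioi 0) = ∫⁻ p in Set.Icc p₀ 0, (ENNReal.ofReal (Vbar p))⁻¹ := by
    apply le_antisymm
    · refine sSup_le ?_
      rintro x ⟨ν, hν, rfl⟩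
      exact lintegral_mono fun p =>
        ENNReal.inv_le_inv.2 (ENNReal.ofReal_le_ofReal (hVgeb ν p))
    · set g : ℕ → ℝ → ℝ≥0∞ := fun n p => (ENNReal.ofReal (V (1/((n:ℝ)+1)) p))⁻¹ with hg
      have hgm : ∀ n, Measurable (g n) := fun n => ((hVmeas _).ennreal_ofReal).inv
      have hgmono : Monotone g := by
        intro n k h p
        refine ENNReal.inv_le_inv.2 (ENNReal.ofReal_le_ofReal (hVmono p ?_))
        have : (n:ℝ) + 1 ≤ (k:ℝ) + 1 := by exact_mod_cast Nat.succ_le_succ h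
        exact one_div_le_one_div_of_le (by positivity) this
      have hsup : ∀ p ∈ Set.Icc p₀ 0, (⨆ n, g n p) = (ENNReal.ofReal (Vbar p))⁻¹ := by
        intro p hp'
        have h1 : Tendsto (fun n : ℕ => V (1/((n:ℝ)+1)) p) atTop (nhds (Vbar p)) := by
          have h0 : Tendsto (fun n : ℕ => 1/((n:ℝ)+1)) atTop (nhds 0) :=
            tendsto_one_div_add_atTop_nhds_zero_nat
          have h2 := Tendsto.min (Tendsto.max
              (tendsto_const_nhds : Tendsto (fun _ : ℕ => Vbar p) atTop (nhds (Vbar p))) h0)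
            (tendsto_const_nhds : Tendsto (fun _ : ℕ => Vhat p) atTop (nhds (Vhat p)))
          simpa [hV, max_eq_left (hrange p).1, min_eq_left (hrange p).2.1] using h2
        have htd : Tendsto (fun n : ℕ => g n p) atTop (nhds ((ENNReal.ofReal (Vbar p))⁻¹)) :=
          (((ENNReal.continuous_ofReal.tendsto _).comp h1).inv)
        exact tendsto_nhds_unique (tendsto_atTop_iSup (fun n k h => hgmono h p)) htd
      calc ∫⁻ p in Set.Icc p₀ 0, (ENNReal.ofReal (Vbar p))⁻¹
          = ∫⁻ p in Set.Icc p₀ 0, ⨆ n, g n p :=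
            (setLIntegral_congr_fun measurableSet_Icc
              (fun p hp' => (hsup p hp').symm))
        _ = ⨆ n, ∫⁻ p in Set.Icc p₀ 0, g n p := lintegral_iSup hgm hgmono
        _ ≤ sSup (F '' Set.Ioi 0) :=
            iSup_le fun n => le_sSup ⟨1/((n:ℝ)+1), Set.mem_Ioi.2 (by positivity), rfl⟩
  have hfinal : Tendsto
      (fun ν => ENNReal.ofReal ((∫ p in p₀..0, 1 / V ν p) + C))
      (nhdsWithin 0 (Set.Ioi 0))
      (nhds ((∫⁻ p in Set.Icc p₀ 0, (ENNReal.ofReal (Vbar p))⁻¹) + ENNReal.ofReal C)) := by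
    have hev : (fun ν => F ν + ENNReal.ofReal C) =ᶠ[nhdsWithin 0 (Set.Ioi 0)]
        (fun ν => ENNReal.ofReal ((∫ p in p₀..0, 1 / V ν p) + C)) :=
      eventually_nhdsWithin_of_forall fun ν hν => (hA ν hν).symm
    exact (Tendsto.congr' hev (by rw [← hL]; exact htendF.add tendsto_const_nhds))
  exact ⟨hcont, fun _ => hfinal⟩
end

section
/- From any state (p₀, v₀) in the set F = {(p, v) ∈ [−L, 0] × [0, v_m] : p + v²/(2a_m) ≤ −v_m²/(2a_m) − c}, where c ≥ 0, the vehicle can reach the state (−c, v_m) at any prescribed time sufficiently far in the future: there exists T₀ such that for every t_f ≥ T₀ there is a feasible trajectory (dynamics ẍ = u, |u| ≤ a_m, velocity in [0, v_m]) starting at (p₀, v₀) at time 0 and arriving at (−c, v_m) at time t_f. -/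
/-- Integral of a linear function. -/
lemma lin_integral (α β a b : ℝ) :
    ∫ t in a..b, (α + β * t) = α * (b - a) + β * (b ^ 2 - a ^ 2) / 2 := by
  have h : ∀ t ∈ Set.uIcc a b, HasDerivAt (fun t => α * t + β / 2 * t ^ 2) (α + β * t) t := by
    intro t _
    have h1 : HasDerivAt (fun t : ℝ => α * t) α t := by
      simpa using (hasDerivAt_id t).const_mul α
    have h2 : HasDerivAt (fun t : ℝ => β / 2 * t ^ 2) (β / 2 * (2 * t)) t := by
      simpa using (hasDerivAt_pow 2 t).const_mul (β / 2)
    have : HasDerivAt (fun t => α * t + β / 2 * t ^ 2) (α + β / 2 * (2 * t)) t := h1.add h2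
    convert this using 1
    ring
  have hint : IntervalIntegrable (fun t => α + β * t) MeasureTheory.volume a b :=
    (continuous_const.add (continuous_const.mul continuous_id)).intervalIntegrable a b
  rw [intervalIntegral.integral_eq_sub_of_hasDerivAt h hint]
  ring

set_option maxHeartbeats 1000000 in
/-- **Reachability of `(−c, v_m)` at any sufficiently late time from the set `F`.**
Double integrator `ẍ = u`, `|u| ≤ a_m` (encoded by `v` being `a_m`-Lipschitz),
`ẋ ∈ [0, v_m]`.  From any state `(p₀, v₀) ∈ [−L, 0] × [0, v_m]` in
`F = {(p,v) : p + v²/(2a_m) ≤ −v_m²/(2a_m) − c}` (with `c ≥ 0`), there exists `T₀`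
such that for every prescribed terminal time `t_f ≥ T₀` there is a feasible trajectory
starting at `(p₀, v₀)` at time `0` and arriving at `(−c, v_m)` at time `t_f`. -/
theorem reachable_at_any_late_time
    (a_m v_m L c p₀ v₀ : ℝ) (ha : 0 < a_m) (hv : 0 < v_m) (hL : 0 < L) (hc : 0 ≤ c)
    (hp : p₀ ∈ Set.Icc (-L) 0) (hv0 : v₀ ∈ Set.Icc 0 v_m)
    (hF : p₀ + v₀ ^ 2 / (2 * a_m) ≤ -(v_m ^ 2 / (2 * a_m)) - c) :
    ∃ T₀ : ℝ, ∀ t_f ≥ T₀, ∃ x v : ℝ → ℝ,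
      (∀ t ∈ Set.Icc (0 : ℝ) t_f, HasDerivAt x (v t) t) ∧
      LipschitzOnWith (Real.toNNReal a_m) v (Set.Icc 0 t_f) ∧
      (∀ t ∈ Set.Icc (0 : ℝ) t_f, 0 ≤ v t ∧ v t ≤ v_m) ∧
      x 0 = p₀ ∧ v 0 = v₀ ∧ x t_f = -c ∧ v t_f = v_m := by
  obtain ⟨hp0, hp1⟩ := hp
  obtain ⟨hv0l, hv0u⟩ := hv0
  have ham : a_m ≠ 0 := ha.ne'
  have hvm : v_m ≠ 0 := hv.ne'
  set t₁ : ℝ := v₀ / a_m with ht₁def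
  set S : ℝ := v_m / a_m with hSdef
  set tcr : ℝ := (-c - p₀ - v₀ ^ 2 / (2 * a_m) - v_m ^ 2 / (2 * a_m)) / v_m with htcrdef
  have ht₁0 : 0 ≤ t₁ := div_nonneg hv0l ha.le
  have hS0 : 0 ≤ S := div_nonneg hv.le ha.le
  have htcr0 : 0 ≤ tcr := div_nonneg (by linarith) hv.le
  have hk1 : a_m * t₁ = v₀ := by rw [ht₁def]; field_simp
  have hk2 : a_m * S = v_m := by rw [hSdef]; field_simp
  have hk3 : v_m * tcr = -c - p₀ - v₀ ^ 2 / (2 * a_m) - v_m ^ 2 / (2 * a_m) := by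
    rw [htcrdef]; field_simp
  refine ⟨t₁ + S + tcr, fun t_f htf => ?_⟩
  set t₂ : ℝ := t_f - S - tcr with ht₂def
  set t₃ : ℝ := t_f - tcr with ht₃def
  have h12 : t₁ ≤ t₂ := by rw [ht₂def]; linarith
  have h23 : t₂ ≤ t₃ := by rw [ht₂def, ht₃def]; linarith
  have h3f : t₃ ≤ t_f := by rw [ht₃def]; linarith
  have hts : t₃ - t₂ = S := by rw [ht₂def, ht₃def]; ring
  have htf3 : t_f - t₃ = tcr := by rw [ht₃def]; ring
  have h02 : 0 ≤ t₂ := ht₁0.trans h12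
  set v : ℝ → ℝ := fun t => max (max (v₀ - a_m * t) 0) (min v_m (a_m * (t - t₂))) with hvdef
  -- Lipschitz
  have hlin1 : LipschitzWith (Real.toNNReal a_m) (fun t : ℝ => v₀ - a_m * t) := by
    apply LipschitzWith.of_dist_le_mul
    intro s t
    rw [Real.dist_eq, Real.dist_eq, Real.coe_toNNReal _ ha.le,
      show (v₀ - a_m * s) - (v₀ - a_m * t) = -(a_m * (s - t)) by ring, abs_neg, abs_mul,
      abs_of_pos ha]
  have hlin2 : LipschitzWith (Real.toNNReal a_m) (fun t : ℝ => a_m * (t - t₂)) := by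
    apply LipschitzWith.of_dist_le_mul
    intro s t
    rw [Real.dist_eq, Real.dist_eq, Real.coe_toNNReal _ ha.le,
      show (a_m * (s - t₂)) - (a_m * (t - t₂)) = a_m * (s - t) by ring, abs_mul,
      abs_of_pos ha]
  have hc0 : LipschitzWith (Real.toNNReal a_m) (fun _ : ℝ => (0 : ℝ)) :=
    (LipschitzWith.const 0).weaken zero_le
  have hcv : LipschitzWith (Real.toNNReal a_m) (fun _ : ℝ => v_m) :=
    (LipschitzWith.const v_m).weaken zero_le
  have hlip : LipschitzWith (Real.toNNReal a_m) v := by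
    have := (hlin1.max hc0).max (hcv.min hlin2)
    simpa [hvdef, max_self] using this
  have hcont : Continuous v := hlip.continuous
  set x : ℝ → ℝ := fun t => p₀ + ∫ s in (0:ℝ)..t, v s with hxdef
  have hderiv : ∀ t ∈ Set.Icc (0:ℝ) t_f, HasDerivAt x (v t) t := by
    intro t _
    exact ((hcont.integral_hasStrictDerivAt 0 t).hasDerivAt).const_add p₀
  -- bounds
  have hbnd : ∀ t ∈ Set.Icc (0:ℝ) t_f, 0 ≤ v t ∧ v t ≤ v_m := by
    intro t ht
    refine ⟨(le_max_right _ 0).trans (le_max_left _ _), ?_⟩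
    apply max_le (max_le ?_ hv.le) (min_le_left _ _)
    have := mul_nonneg ha.le ht.1
    linarith
  -- endpoint values of v
  have hv0' : v 0 = v₀ := by
    have e : v 0 = max (max v₀ 0) (min v_m (a_m * (0 - t₂))) := by
      simp only [hvdef, mul_zero, sub_zero]
    have h1 : a_m * (0 - t₂) ≤ 0 := mul_nonpos_of_nonneg_of_nonpos ha.le (by linarith)
    rw [e, max_eq_left hv0l, max_eq_left ((min_le_right _ _).trans (by linarith))]
  have hvf : v t_f = v_m := by
    have key : a_m * S ≤ a_m * (t_f - t₂) :=
      mul_le_mul_of_nonneg_left (by rw [ht₂def]; linarith) ha.le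
    have h1 : v_m ≤ a_m * (t_f - t₂) := by linarith
    have key2 : a_m * t₁ ≤ a_m * t_f := mul_le_mul_of_nonneg_left (by linarith) ha.le
    have h2 : v₀ - a_m * t_f ≤ v_m := by linarith
    simp only [hvdef]
    rw [min_eq_left h1, max_eq_right (max_le h2 hv.le)]
  -- integral computation
  have hii : ∀ a b : ℝ, IntervalIntegrable v MeasureTheory.volume a b :=
    fun a b => hcont.intervalIntegrable a b
  have iA : ∫ s in (0:ℝ)..t₁, v s = v₀ ^ 2 / (2 * a_m) := by
    have e : ∫ s in (0:ℝ)..t₁, v s = ∫ s in (0:ℝ)..t₁, (v₀ + (-a_m) * s) := by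
      apply intervalIntegral.integral_congr
      intro t ht
      rw [Set.uIcc_of_le ht₁0] at ht
      have key : a_m * t ≤ a_m * t₁ := mul_le_mul_of_nonneg_left ht.2 ha.le
      have h1 : 0 ≤ v₀ - a_m * t := by linarith
      have h3 : a_m * (t - t₂) ≤ 0 :=
        mul_nonpos_of_nonneg_of_nonpos ha.le (by linarith [ht.2])
      have h2 : min v_m (a_m * (t - t₂)) ≤ v₀ - a_m * t :=
        (min_le_right _ _).trans (by linarith)
      simp only [hvdef]
      rw [max_eq_left h1, max_eq_left h2]
      ring
    rw [e, lin_integral, ht₁def]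
    field_simp
    ring
  have iB : ∫ s in t₁..t₂, v s = 0 := by
    have e : ∫ s in t₁..t₂, v s = ∫ s in t₁..t₂, ((0:ℝ) + 0 * s) := by
      apply intervalIntegral.integral_congr
      intro t ht
      rw [Set.uIcc_of_le h12] at ht
      have key : a_m * t₁ ≤ a_m * t := mul_le_mul_of_nonneg_left ht.1 ha.le
      have h1 : v₀ - a_m * t ≤ 0 := by linarith
      have h2 : min v_m (a_m * (t - t₂)) ≤ 0 :=
        (min_le_right _ _).trans
          (mul_nonpos_of_nonneg_of_nonpos ha.le (by linarith [ht.2]))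
      simp only [hvdef]
      rw [max_eq_right h1, max_eq_left h2]
      ring
    rw [e, lin_integral]
    ring
  have iC : ∫ s in t₂..t₃, v s = v_m ^ 2 / (2 * a_m) := by
    have e : ∫ s in t₂..t₃, v s = ∫ s in t₂..t₃, ((-(a_m * t₂)) + a_m * s) := by
      apply intervalIntegral.integral_congr
      intro t ht
      rw [Set.uIcc_of_le h23] at ht
      have key : a_m * t₁ ≤ a_m * t := mul_le_mul_of_nonneg_left (by linarith [ht.1]) ha.le
      have h1 : v₀ - a_m * t ≤ 0 := by linarith
      have h2 : 0 ≤ a_m * (t - t₂) := mul_nonneg ha.le (by linarith [ht.1])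
      have key2 : a_m * (t - t₂) ≤ a_m * S :=
        mul_le_mul_of_nonneg_left (by linarith [ht.2, hts]) ha.le
      have h3 : a_m * (t - t₂) ≤ v_m := by linarith
      simp only [hvdef]
      rw [max_eq_right h1, min_eq_right h3, max_eq_right h2]
      ring
    have e2 : t₃ = t₂ + S := by linarith
    rw [e, lin_integral, e2]
    have e3 : -(a_m * t₂) * (t₂ + S - t₂) + a_m * ((t₂ + S) ^ 2 - t₂ ^ 2) / 2
        = a_m * S ^ 2 / 2 := by ring
    rw [e3, hSdef]
    field_simp
  have iD : ∫ s in t₃..t_f, v s = v_m * tcr := by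
    have e : ∫ s in t₃..t_f, v s = ∫ s in t₃..t_f, (v_m + 0 * s) := by
      apply intervalIntegral.integral_congr
      intro t ht
      rw [Set.uIcc_of_le h3f] at ht
      have key : a_m * S ≤ a_m * (t - t₂) :=
        mul_le_mul_of_nonneg_left (by linarith [ht.1, hts]) ha.le
      have h1 : v_m ≤ a_m * (t - t₂) := by linarith
      have key2 : a_m * t₁ ≤ a_m * t := mul_le_mul_of_nonneg_left (by linarith [ht.1]) ha.le
      have h2 : v₀ - a_m * t ≤ v_m := by linarith
      simp only [hvdef]
      rw [min_eq_left h1, max_eq_right (max_le h2 hv.le)]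
      ring
    rw [e, lin_integral]
    have e2 : t_f = t₃ + tcr := by linarith
    rw [e2]
    ring
  have hsplit : ∫ s in (0:ℝ)..t_f, v s = -c - p₀ := by
    rw [← intervalIntegral.integral_add_adjacent_intervals (hii 0 t₁) (hii t₁ t_f),
      ← intervalIntegral.integral_add_adjacent_intervals (hii t₁ t₂) (hii t₂ t_f),
      ← intervalIntegral.integral_add_adjacent_intervals (hii t₂ t₃) (hii t₃ t_f),
      iA, iB, iC, iD]
    linarith [hk3]
  have hx0 : x 0 = p₀ := by
    simp only [hxdef, intervalIntegral.integral_same, add_zero]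
  have hxf : x t_f = -c := by
    simp only [hxdef]
    rw [hsplit]
    ring
  exact ⟨x, v, hderiv, hlip.lipschitzOnWith, hbnd, hx0, hv0', hxf, hvf⟩
end

section
/- Conversely, if (p₀, v₀) ∈ [−L, 0] × [0, v_m] satisfies |p₀ − (−c)| < (v₀² + v_m²)/(2a_m) (i.e., the state is in the reachable set of (−c, v_m) but outside F), then every feasible trajectory from (p₀, v₀) to (−c, v_m) has duration strictly less than 2v_m/a_m. -/
/-- **Short duration for states outside `F` in the reachable set of `(−c, v_m)`.**
Double integrator `ẍ = u`, `|u| ≤ a_m`, `ẋ ∈ [0, v_m]`.  If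
`(p₀, v₀) ∈ [−L, 0] × [0, v_m]` satisfies `|p₀ − (−c)| < (v₀² + v_m²)/(2 a_m)`
(the state is in the reachable set of `(−c, v_m)` but outside `F`), then every feasible
trajectory from `(p₀, v₀)` to `(−c, v_m)` has duration strictly less than
`2 v_m / a_m`. -/
theorem duration_lt_outside_F
    (a_m v_m L c p₀ v₀ t_f : ℝ) (ha : 0 < a_m) (hv : 0 < v_m) (hc : 0 ≤ c)
    (hp : p₀ ∈ Set.Icc (-L) 0) (hv0 : v₀ ∈ Set.Icc 0 v_m)
    (hnear : |p₀ - (-c)| < (v₀ ^ 2 + v_m ^ 2) / (2 * a_m))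
    (x v : ℝ → ℝ) (ht : 0 ≤ t_f)
    (hx : ∀ t ∈ Set.Icc (0 : ℝ) t_f, HasDerivAt x (v t) t)
    (hLip : LipschitzOnWith (Real.toNNReal a_m) v (Set.Icc 0 t_f))
    (hvb : ∀ t ∈ Set.Icc (0 : ℝ) t_f, 0 ≤ v t ∧ v t ≤ v_m)
    (h0 : x 0 = p₀) (hv0' : v 0 = v₀) (hf : x t_f = -c) (hvf : v t_f = v_m) :
    t_f < 2 * v_m / a_m := by
  by_contra hcon
  push_neg at hcon
  obtain ⟨hv01, hv02⟩ := hv0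
  set t₁ := v₀ / a_m with ht₁def
  set t₂ := t_f - v_m / a_m with ht₂def
  have hvma : 0 < v_m / a_m := div_pos hv ha
  have ht₁0 : 0 ≤ t₁ := div_nonneg hv01 ha.le
  have ht12 : t₁ ≤ t₂ := by
    have h1 : v₀ / a_m ≤ v_m / a_m := by gcongr
    have h2 : v_m / a_m + v_m / a_m ≤ t_f := by
      have : v_m / a_m + v_m / a_m = 2 * v_m / a_m := by ring
      linarith [hcon, this.le]
    rw [ht₁def, ht₂def]; linarith
  have ht₂f : t₂ ≤ t_f := by rw [ht₂def]; linarith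
  have ht₁f : t₁ ≤ t_f := le_trans ht12 ht₂f
  have ht₂0 : 0 ≤ t₂ := le_trans ht₁0 ht12
  have hK : ((Real.toNNReal a_m : NNReal) : ℝ) = a_m := Real.coe_toNNReal a_m ha.le
  -- Lipschitz lower bounds near the endpoints
  have hlow1 : ∀ t ∈ Set.Icc (0:ℝ) t₁, v₀ - a_m * t ≤ v t := by
    intro t htt
    have htIcc : t ∈ Set.Icc (0:ℝ) t_f := ⟨htt.1, le_trans htt.2 ht₁f⟩
    have hd := hLip.dist_le_mul t htIcc 0 ⟨le_refl 0, ht⟩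
    rw [hK] at hd
    rw [Real.dist_eq, Real.dist_eq, sub_zero, abs_of_nonneg htt.1] at hd
    have := abs_le.mp hd
    rw [hv0'] at this
    linarith [this.1]
  have hlow2 : ∀ t ∈ Set.Icc t₂ t_f, v_m - a_m * (t_f - t) ≤ v t := by
    intro t htt
    have htIcc : t ∈ Set.Icc (0:ℝ) t_f := ⟨le_trans ht₂0 htt.1, htt.2⟩
    have hd := hLip.dist_le_mul t htIcc t_f ⟨ht, le_refl _⟩
    rw [hK] at hd
    rw [Real.dist_eq, Real.dist_eq, abs_sub_comm t t_f, abs_of_nonneg (by linarith [htt.2] : (0:ℝ) ≤ t_f - t)] at hd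
    have := abs_le.mp hd
    rw [hvf] at this
    linarith [this.1]
  -- continuity and integrability
  have hvcont : ContinuousOn v (Set.Icc 0 t_f) := hLip.continuousOn
  have hint : IntervalIntegrable v MeasureTheory.volume 0 t_f := by
    apply ContinuousOn.intervalIntegrable
    rwa [Set.uIcc_of_le ht]
  have hint1 : IntervalIntegrable v MeasureTheory.volume 0 t₁ :=
    hint.mono_set (by rw [Set.uIcc_of_le ht₁0, Set.uIcc_of_le ht]; exact Set.Icc_subset_Icc le_rfl ht₁f)
  have hint2 : IntervalIntegrable v MeasureTheory.volume t₁ t₂ :=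
    hint.mono_set (by rw [Set.uIcc_of_le ht12, Set.uIcc_of_le ht]; exact Set.Icc_subset_Icc ht₁0 ht₂f)
  have hint3 : IntervalIntegrable v MeasureTheory.volume t₂ t_f :=
    hint.mono_set (by rw [Set.uIcc_of_le ht₂f, Set.uIcc_of_le ht]; exact Set.Icc_subset_Icc ht₂0 le_rfl)
  -- FTC
  have hftc : ∫ t in (0:ℝ)..t_f, v t = x t_f - x 0 := by
    apply intervalIntegral.integral_eq_sub_of_hasDerivAt
    · intro t htt
      exact hx t (by rwa [Set.uIcc_of_le ht] at htt)
    · exact hint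
  have hsplit : (∫ t in (0:ℝ)..t₁, v t) + (∫ t in t₁..t₂, v t) + (∫ t in t₂..t_f, v t)
      = ∫ t in (0:ℝ)..t_f, v t := by
    rw [intervalIntegral.integral_add_adjacent_intervals hint1 hint2,
        intervalIntegral.integral_add_adjacent_intervals (hint1.trans hint2) hint3]
  -- lower bound on first piece
  have hb1 : v₀ ^ 2 / (2 * a_m) ≤ ∫ t in (0:ℝ)..t₁, v t := by
    have hlin : IntervalIntegrable (fun t : ℝ => v₀ - a_m * t) MeasureTheory.volume 0 t₁ :=
      ((continuous_const.sub (continuous_const.mul continuous_id')).intervalIntegrable _ _)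
    have hm : (∫ t in (0:ℝ)..t₁, (v₀ - a_m * t)) ≤ ∫ t in (0:ℝ)..t₁, v t :=
      intervalIntegral.integral_mono_on ht₁0 hlin hint1 hlow1
    have hcomp : (∫ t in (0:ℝ)..t₁, (v₀ - a_m * t)) = v₀ ^ 2 / (2 * a_m) := by
      have e1 : IntervalIntegrable (fun _ : ℝ => v₀) MeasureTheory.volume 0 t₁ :=
        intervalIntegrable_const
      have e2 : IntervalIntegrable (fun t : ℝ => a_m * t) MeasureTheory.volume t₂ t_f :=
        (continuous_const.mul continuous_id').intervalIntegrable _ _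
      have e2' : IntervalIntegrable (fun t : ℝ => a_m * t) MeasureTheory.volume 0 t₁ :=
        (continuous_const.mul continuous_id').intervalIntegrable _ _
      rw [intervalIntegral.integral_sub e1 e2',
          intervalIntegral.integral_const, intervalIntegral.integral_const_mul,
          integral_id]
      rw [ht₁def]
      field_simp
      have hinv : a_m * a_m⁻¹ = 1 := mul_inv_cancel₀ ha.ne'
      linear_combination 2 * v₀ ^ 2 * hinv
    linarith
  -- middle piece nonnegative
  have hb2 : (0:ℝ) ≤ ∫ t in t₁..t₂, v t := by
    apply intervalIntegral.integral_nonneg ht12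
    intro u hu
    exact (hvb u ⟨le_trans ht₁0 hu.1, le_trans hu.2 ht₂f⟩).1
  -- lower bound on last piece
  have hb3 : v_m ^ 2 / (2 * a_m) ≤ ∫ t in t₂..t_f, v t := by
    have hlin : IntervalIntegrable (fun t : ℝ => v_m - a_m * (t_f - t)) MeasureTheory.volume t₂ t_f :=
      ((continuous_const.sub (continuous_const.mul (continuous_const.sub continuous_id'))).intervalIntegrable _ _)
    have hm : (∫ t in t₂..t_f, (v_m - a_m * (t_f - t))) ≤ ∫ t in t₂..t_f, v t :=
      intervalIntegral.integral_mono_on ht₂f hlin hint3 hlow2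
    have hcomp : (∫ t in t₂..t_f, (v_m - a_m * (t_f - t))) = v_m ^ 2 / (2 * a_m) := by
      have : ∀ t : ℝ, v_m - a_m * (t_f - t) = (v_m - a_m * t_f) + a_m * t := by
        intro t; ring
      simp_rw [this]
      have e1 : IntervalIntegrable (fun _ : ℝ => v_m - a_m * t_f) MeasureTheory.volume t₂ t_f :=
        intervalIntegrable_const
      have e2 : IntervalIntegrable (fun t : ℝ => a_m * t) MeasureTheory.volume t₂ t_f :=
        (continuous_const.mul continuous_id').intervalIntegrable _ _
      rw [intervalIntegral.integral_add e1 e2,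
          intervalIntegral.integral_const, intervalIntegral.integral_const_mul,
          integral_id]
      rw [ht₂def]
      field_simp
      have hinv : a_m * a_m⁻¹ = 1 := mul_inv_cancel₀ ha.ne'
      linear_combination (2 * v_m ^ 2 - 2 * a_m * v_m * t_f) * hinv
    linarith
  -- combine
  have hdisp : x t_f - x 0 = -c - p₀ := by rw [hf, h0]
  have habs : -c - p₀ ≤ |p₀ - (-c)| := by
    rw [abs_sub_comm]
    calc -c - p₀ ≤ |(-c) - p₀| := le_abs_self _
    _ = |(-c) - p₀| := rfl
  have hsum : v₀ ^ 2 / (2 * a_m) + v_m ^ 2 / (2 * a_m) = (v₀ ^ 2 + v_m ^ 2) / (2 * a_m) := by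
    ring
  linarith [hb1, hb2, hb3, hsplit, hftc, hdisp, habs, hnear, hsum]
end

section
/- Under the coordination algorithm, at the moment a new vehicle A arrives, every vehicle i scheduled to cross after A (the ν-th after A) has state in the set F_ν = {(p, v) : p + v²/(2a_m) ≤ −v_m²/(2a_m) − (ν−1)l}, provided the road length satisfies L ≥ 2v_m²/a_m and the polling policy is regular. Specifically: if the vehicle's previously assigned trajectory reaches the state (−(ν−1)l, v_m) at a time at least 2v_m/a_m after the current time, then its current state lies in F_ν. -/
/-- **Vehicles scheduled after a new arrival lie in `F_ν`.**
Double integrator `ẍ = u`, `|u| ≤ a_m` (encoded by `v` being `a_m`-Lipschitz),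
`ẋ ∈ [0, v_m]`, vehicle length `l > 0`, road length `L ≥ 2 v_m²/a_m`.  Suppose the
`ν`-th vehicle after the newly arrived vehicle `A` has current state `(p₀, v₀)` at the
arrival time `t₀'` and follows a feasible trajectory arriving at the state
`I_ν = (−(ν−1)l, v_m)` at a time `T` with `T − t₀' ≥ 2 v_m/a_m` (as guaranteed by the
regular polling policy and the road-length assumption).  Then
`(p₀, v₀) ∈ F_ν = {(p,v) : p + v²/(2a_m) ≤ −v_m²/(2a_m) − (ν−1)l}`. -/
theorem state_in_F_of_late_schedule
    (a_m v_m L l t₀' T p₀ v₀ : ℝ) (ν : ℕ)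
    (ha : 0 < a_m) (hvm : 0 < v_m) (hl : 0 < l) (hν : 1 ≤ ν)
    (hL : 2 * v_m ^ 2 / a_m ≤ L)
    (hT : 2 * v_m / a_m ≤ T - t₀')
    (hp0r : p₀ ∈ Set.Icc (-L) 0) (hv0r : v₀ ∈ Set.Icc 0 v_m)
    (x v : ℝ → ℝ)
    (hx : ∀ t ∈ Set.Icc t₀' T, HasDerivAt x (v t) t)
    (hLip : LipschitzOnWith (Real.toNNReal a_m) v (Set.Icc t₀' T))
    (hvb : ∀ t ∈ Set.Icc t₀' T, 0 ≤ v t ∧ v t ≤ v_m)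
    (hx0 : x t₀' = p₀) (hv0 : v t₀' = v₀)
    (hxT : x T = -(((ν : ℝ) - 1) * l)) (hvT : v T = v_m) :
    p₀ + v₀ ^ 2 / (2 * a_m) ≤ -(v_m ^ 2 / (2 * a_m)) - ((ν : ℝ) - 1) * l := by
  obtain ⟨hv00, hv0m⟩ := hv0r
  have h2vm : 0 < 2 * v_m / a_m := by positivity
  have hT' : t₀' ≤ T := by linarith
  set t₁ := t₀' + v₀ / a_m with ht₁
  set m := T - v_m / a_m with hm
  have h01 : t₀' ≤ t₁ := by
    have : 0 ≤ v₀ / a_m := by positivity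
    simp [ht₁]; linarith
  have hdv : v₀ / a_m ≤ v_m / a_m := by gcongr
  have h2 : 2 * v_m / a_m = v_m / a_m + v_m / a_m := by ring
  have h1m : t₁ ≤ m := by
    simp only [ht₁, hm]; linarith
  have hmT : m ≤ T := by
    have : 0 ≤ v_m / a_m := by positivity
    simp only [hm]; linarith
  have hcoe : ((Real.toNNReal a_m : NNReal) : ℝ) = a_m := Real.coe_toNNReal _ ha.le
  have hLipR : ∀ s ∈ Set.Icc t₀' T, ∀ t ∈ Set.Icc t₀' T, |v s - v t| ≤ a_m * |s - t| := by
    intro s hs t ht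
    have := hLip.dist_le_mul s hs t ht
    rwa [Real.dist_eq, Real.dist_eq, hcoe] at this
  have hcont : ContinuousOn v (Set.Icc t₀' T) := hLip.continuousOn
  have hsub1 : Set.Icc t₀' t₁ ⊆ Set.Icc t₀' T := Set.Icc_subset_Icc le_rfl (h1m.trans hmT)
  have hsub2 : Set.Icc t₁ m ⊆ Set.Icc t₀' T := Set.Icc_subset_Icc h01 hmT
  have hsub3 : Set.Icc m T ⊆ Set.Icc t₀' T := Set.Icc_subset_Icc (h01.trans h1m) le_rfl
  have int1 : IntervalIntegrable v MeasureTheory.volume t₀' t₁ :=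
    (hcont.mono hsub1).intervalIntegrable_of_Icc h01
  have int2 : IntervalIntegrable v MeasureTheory.volume t₁ m :=
    (hcont.mono hsub2).intervalIntegrable_of_Icc h1m
  have int3 : IntervalIntegrable v MeasureTheory.volume m T :=
    (hcont.mono hsub3).intervalIntegrable_of_Icc hmT
  have intall : IntervalIntegrable v MeasureTheory.volume t₀' T :=
    (hcont).intervalIntegrable_of_Icc hT'
  have key : ∫ t in t₀'..T, v t = x T - x t₀' := by
    apply intervalIntegral.integral_eq_sub_of_hasDerivAt
    · intro t ht
      exact hx t (by rwa [Set.uIcc_of_le hT'] at ht)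
    · exact intall
  have split : (∫ t in t₀'..t₁, v t) + (∫ t in t₁..m, v t) + (∫ t in m..T, v t)
      = ∫ t in t₀'..T, v t := by
    rw [intervalIntegral.integral_add_adjacent_intervals int1 int2,
        intervalIntegral.integral_add_adjacent_intervals (int1.trans int2) int3]
  -- Piece 1
  have hg1 : ∀ t : ℝ, HasDerivAt (fun t => v₀ * t - a_m * (t - t₀') ^ 2 / 2)
      (v₀ - a_m * (t - t₀')) t := by
    intro t
    have h1 : HasDerivAt (fun t : ℝ => v₀ * t) v₀ t := by
      simpa using (hasDerivAt_id t).const_mul v₀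
    have h2' : HasDerivAt (fun t : ℝ => t - t₀') 1 t := (hasDerivAt_id t).sub_const t₀'
    have h3 : HasDerivAt (fun t : ℝ => (t - t₀') ^ 2) (2 * (t - t₀')) t := by
      simpa using h2'.fun_pow 2
    have h4 := (h3.const_mul a_m).div_const 2
    exact (h1.fun_sub h4).congr_deriv (by ring)
  have intf1 : IntervalIntegrable (fun t => v₀ - a_m * (t - t₀')) MeasureTheory.volume t₀' t₁ :=
    (Continuous.intervalIntegrable (continuous_const.sub
      (continuous_const.mul ((continuous_id).sub continuous_const))) _ _)
  have val1 : (∫ t in t₀'..t₁, (v₀ - a_m * (t - t₀'))) = v₀ ^ 2 / (2 * a_m) := by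
    rw [intervalIntegral.integral_eq_sub_of_hasDerivAt (fun t _ => hg1 t) intf1]
    simp only [ht₁]
    field_simp
    ring
  have mono1 : (∫ t in t₀'..t₁, (v₀ - a_m * (t - t₀'))) ≤ ∫ t in t₀'..t₁, v t := by
    apply intervalIntegral.integral_mono_on h01 intf1 int1
    intro t ht
    have htT : t ∈ Set.Icc t₀' T := hsub1 ht
    have := hLipR t₀' (Set.left_mem_Icc.2 hT') t htT
    have habs : |t₀' - t| = t - t₀' := by rw [abs_sub_comm, abs_of_nonneg]; linarith [ht.1]
    rw [habs, hv0] at this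
    have := (abs_le.1 this).2
    linarith
  -- Piece 2
  have mono2 : (0:ℝ) ≤ ∫ t in t₁..m, v t := by
    apply intervalIntegral.integral_nonneg h1m
    intro u hu
    exact (hvb u (hsub2 hu)).1
  -- Piece 3
  have hg3 : ∀ t : ℝ, HasDerivAt (fun t => v_m * t + a_m * (T - t) ^ 2 / 2)
      (v_m - a_m * (T - t)) t := by
    intro t
    have h1 : HasDerivAt (fun t : ℝ => v_m * t) v_m t := by
      simpa using (hasDerivAt_id t).const_mul v_m
    have h2' : HasDerivAt (fun t : ℝ => T - t) (-1) t := by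
      simpa using (hasDerivAt_id t).const_sub T
    have h3 : HasDerivAt (fun t : ℝ => (T - t) ^ 2) (2 * (T - t) * (-1)) t := by
      simpa using h2'.fun_pow 2
    have h4 := (h3.const_mul a_m).div_const 2
    exact (h1.fun_add h4).congr_deriv (by ring)
  have intf3 : IntervalIntegrable (fun t => v_m - a_m * (T - t)) MeasureTheory.volume m T :=
    (Continuous.intervalIntegrable (continuous_const.sub
      (continuous_const.mul (continuous_const.sub continuous_id))) _ _)
  have val3 : (∫ t in m..T, (v_m - a_m * (T - t))) = v_m ^ 2 / (2 * a_m) := by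
    rw [intervalIntegral.integral_eq_sub_of_hasDerivAt (fun t _ => hg3 t) intf3]
    simp only [hm]
    field_simp
    ring
  have mono3 : (∫ t in m..T, (v_m - a_m * (T - t))) ≤ ∫ t in m..T, v t := by
    apply intervalIntegral.integral_mono_on hmT intf3 int3
    intro t ht
    have htT : t ∈ Set.Icc t₀' T := hsub3 ht
    have := hLipR T (Set.right_mem_Icc.2 hT') t htT
    have habs : |T - t| = T - t := abs_of_nonneg (by linarith [ht.2])
    rw [habs, hvT] at this
    have := (abs_le.1 this).2
    linarith
  have hxTv : x T - x t₀' ≥ v₀ ^ 2 / (2 * a_m) + v_m ^ 2 / (2 * a_m) := by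
    rw [← key, ← split]
    linarith [mono1, mono2, mono3, val1, val3]
  rw [hx0, hxT] at hxTv
  linarith
end
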